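/- Camembert lemma: Let L be an ℳ-complex and w a 0-cell of L. Then the set L_w = {u ∈ L₂ ∣ w is a vertex of u} can be arranged in a cyclic order u₁, ..., uₙ such that consecutive 2-cells (indices mod n) are w-neighbours, i.e. share an edge having w as a vertex. -/
import Mathlib


open scoped Classical

/-- `e` is an edge of the 2-cell `u`. -/
def edgeOf {K2 K1 : Type*} (d2 : Fin 3 → K2 → K1) (e : K1) (u : K2) : Prop :=
  ∃ i, d2 i u = e

/-- `w` is a vertex of the 2-cell `u` (a face of a face of `u`). -/
def vertexOf {K2 K1 K0 : Type*} (d2 : Fin 3 → K2 → K1) (d1 : Fin 2 → K1 → K0)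
    (w : K0) (u : K2) : Prop :=
  ∃ i j, d1 j (d2 i u) = w

/-- Two 2-cells are `w`-neighbours when they share an edge having `w` as a vertex. -/
def wNbr {K2 K1 K0 : Type*} (d2 : Fin 3 → K2 → K1) (d1 : Fin 2 → K1 → K0)
    (w : K0) (u u' : K2) : Prop :=
  ∃ e : K1, edgeOf d2 e u ∧ edgeOf d2 e u' ∧ ∃ j, d1 j e = w

/-- The (signed) incidence coefficient of the 1-cell `e` in the boundary of the
2-cell `u`: the coefficient of `e` in `d₀u - d₁u + d₂u`. -/
noncomputable def incCoef {K2 K1 : Type*} (d2 : Fin 3 → K2 → K1) (u : K2) (e : K1) : ℤ :=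
  ∑ i : Fin 3, if d2 i u = e then (if i = 1 then -1 else 1) else 0

/-- The boundary `∂₂` of a 2-chain, as a coefficient function on 1-cells. -/
noncomputable def bdry2 {K2 K1 : Type*} (d2 : Fin 3 → K2 → K1) (c : K2 →₀ ℤ) : K1 → ℤ :=
  fun e => c.sum fun u n => n * incCoef d2 u e

/-- An `ℳ`-complex: a connected Δ-complex which is (0) finite, (1) homogeneous
2-dimensional, (2) regular, (3) with every 1-cell an edge of exactly two 2-cells,
(4) with linked links of 0-cells, and (5) orientable (its group of 2-cycles is
infinite cyclic). -/
structure MComplex (K2 K1 K0 : Type*) : Type _ where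
  d2 : Fin 3 → K2 → K1
  d1 : Fin 2 → K1 → K0
  finite2 : Finite K2
  finite1 : Finite K1
  finite0 : Finite K0
  simp01 : ∀ u, d1 0 (d2 1 u) = d1 0 (d2 0 u)
  simp02 : ∀ u, d1 0 (d2 2 u) = d1 1 (d2 0 u)
  simp12 : ∀ u, d1 1 (d2 2 u) = d1 1 (d2 1 u)
  homog1 : ∀ e : K1, ∃ u : K2, edgeOf d2 e u
  homog0 : ∀ w : K0, ∃ (e : K1) (j : Fin 2), d1 j e = w
  regular2 : ∀ u : K2, Function.Injective fun i => d2 i u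
  regular1 : ∀ e : K1, d1 0 e ≠ d1 1 e
  edge_two : ∀ e : K1, ∃ u v : K2, u ≠ v ∧ edgeOf d2 e u ∧ edgeOf d2 e v ∧
      ∀ x : K2, edgeOf d2 e x → x = u ∨ x = v
  linked : ∀ (w : K0) (u u' : K2), vertexOf d2 d1 w u → vertexOf d2 d1 w u' →
      Relation.ReflTransGen (wNbr d2 d1 w) u u'
  connected : ∀ w w' : K0, Relation.ReflTransGen
      (fun a b => ∃ e : K1, (d1 0 e = a ∧ d1 1 e = b) ∨ (d1 0 e = b ∧ d1 1 e = a)) w w'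
  orientable : ∃ c : K2 →₀ ℤ, c ≠ 0 ∧ bdry2 d2 c = 0 ∧
      ∀ c' : K2 →₀ ℤ, bdry2 d2 c' = 0 → ∃ k : ℤ, c' = k • c

namespace CamembertAux

variable {K2 K1 K0 : Type*}

/-- `e` is an edge of `u` having `w` as an endpoint (a "`w`-edge of `u`"). -/
def WEdge (M : MComplex K2 K1 K0) (w : K0) (e : K1) (u : K2) : Prop :=
  edgeOf M.d2 e u ∧ ∃ j, M.d1 j e = w

lemma WEdge.vertexOf {M : MComplex K2 K1 K0} {w : K0} {e : K1} {u : K2}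
    (h : WEdge M w e u) : vertexOf M.d2 M.d1 w u := by
  obtain ⟨⟨i, hi⟩, j, hj⟩ := h
  exact ⟨i, j, by rw [hi]; exact hj⟩

lemma d2_ne (M : MComplex K2 K1 K0) (u : K2) {i i' : Fin 3} (h : i ≠ i') :
    M.d2 i u ≠ M.d2 i' u := fun he => h (M.regular2 u he)

/-- A 2-cell having `w` as a vertex has exactly two `w`-edges. -/
lemma two_wedges (M : MComplex K2 K1 K0) (w : K0) (u : K2)
    (h : vertexOf M.d2 M.d1 w u) :
    ∃ e1 e2 : K1, e1 ≠ e2 ∧ WEdge M w e1 u ∧ WEdge M w e2 u ∧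
      ∀ e, WEdge M w e u → e = e1 ∨ e = e2 := by
  obtain ⟨i, j, hij⟩ := h
  have r0 := M.regular1 (M.d2 0 u)
  have r1 := M.regular1 (M.d2 1 u)
  have r2 := M.regular1 (M.d2 2 u)
  have s01 := M.simp01 u
  have s02 := M.simp02 u
  have s12 := M.simp12 u
  have key : (M.d1 0 (M.d2 0 u) = w) ∨ (M.d1 1 (M.d2 0 u) = w) ∨
      (M.d1 1 (M.d2 1 u) = w) := by
    fin_cases i <;> fin_cases j
    · exact Or.inl hij
    · exact Or.inr (Or.inl hij)
    · exact Or.inl (by rw [← s01]; exact hij)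
    · exact Or.inr (Or.inr hij)
    · exact Or.inr (Or.inl (by rw [← s02]; exact hij))
    · exact Or.inr (Or.inr (by rw [← s12]; exact hij))
  rcases key with ha | hb | hc
  · refine ⟨M.d2 0 u, M.d2 1 u, d2_ne M u (by decide), ⟨⟨0, rfl⟩, 0, ha⟩,
      ⟨⟨1, rfl⟩, 0, by rw [s01]; exact ha⟩, ?_⟩
    rintro e ⟨⟨i', rfl⟩, j', hj'⟩
    fin_cases i'
    · exact Or.inl rfl
    · exact Or.inr rfl
    · exfalso
      fin_cases j'
      · have hb' : M.d1 1 (M.d2 0 u) = w := by rw [← s02]; exact hj'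
        exact r0 (ha.trans hb'.symm)
      · have hc' : M.d1 1 (M.d2 1 u) = w := by rw [← s12]; exact hj'
        have hwa : M.d1 0 (M.d2 1 u) = w := by rw [s01]; exact ha
        exact r1 (hwa.trans hc'.symm)
  · refine ⟨M.d2 0 u, M.d2 2 u, d2_ne M u (by decide), ⟨⟨0, rfl⟩, 1, hb⟩,
      ⟨⟨2, rfl⟩, 0, by rw [s02]; exact hb⟩, ?_⟩
    rintro e ⟨⟨i', rfl⟩, j', hj'⟩
    fin_cases i'
    · exact Or.inl rfl
    · exfalso
      fin_cases j'
      · have ha' : M.d1 0 (M.d2 0 u) = w := by rw [← s01]; exact hj'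
        exact r0 (ha'.trans hb.symm)
      · have hb' : M.d1 0 (M.d2 2 u) = w := by rw [s02]; exact hb
        have hc' : M.d1 1 (M.d2 2 u) = w := by rw [s12]; exact hj'
        exact r2 (hb'.trans hc'.symm)
    · exact Or.inr rfl
  · refine ⟨M.d2 1 u, M.d2 2 u, d2_ne M u (by decide), ⟨⟨1, rfl⟩, 1, hc⟩,
      ⟨⟨2, rfl⟩, 1, by rw [s12]; exact hc⟩, ?_⟩
    rintro e ⟨⟨i', rfl⟩, j', hj'⟩
    fin_cases i'
    · exfalso
      fin_cases j'
      · have hwa : M.d1 0 (M.d2 1 u) = w := by rw [s01]; exact hj'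
        exact r1 (hwa.trans hc.symm)
      · have hb' : M.d1 0 (M.d2 2 u) = w := by rw [s02]; exact hj'
        have hc' : M.d1 1 (M.d2 2 u) = w := by rw [s12]; exact hc
        exact r2 (hb'.trans hc'.symm)
    · exact Or.inl rfl
    · exact Or.inr rfl

/-- The other 2-cell sharing the edge `e` with `u`. -/
noncomputable def flip (M : MComplex K2 K1 K0) (u : K2) (e : K1) : K2 :=
  if h : ∃ v, v ≠ u ∧ edgeOf M.d2 e v then h.choose else u

lemma flip_spec (M : MComplex K2 K1 K0) {u : K2} {e : K1} (hu : edgeOf M.d2 e u) :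
    flip M u e ≠ u ∧ edgeOf M.d2 e (flip M u e) := by
  obtain ⟨x, y, hxy, hx, hy, hcl⟩ := M.edge_two e
  have h : ∃ v, v ≠ u ∧ edgeOf M.d2 e v := by
    rcases hcl u hu with rfl | rfl
    · exact ⟨y, hxy.symm, hy⟩
    · exact ⟨x, hxy, hx⟩
  rw [flip, dif_pos h]
  exact h.choose_spec

lemma flip_unique (M : MComplex K2 K1 K0) {u v : K2} {e : K1}
    (hu : edgeOf M.d2 e u) (hv : edgeOf M.d2 e v) (hne : v ≠ u) : flip M u e = v := by
  obtain ⟨hfu, hf⟩ := flip_spec M hu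
  obtain ⟨x, y, hxy, hx, hy, hcl⟩ := M.edge_two e
  rcases hcl u hu with h1 | h1 <;> rcases hcl v hv with h2 | h2 <;>
      rcases hcl _ hf with h3 | h3 <;>
    first
      | exact absurd (h2.trans h1.symm) hne
      | exact absurd (h3.trans h1.symm) hfu
      | exact h3.trans h2.symm

/-- The other `w`-edge of `u`. -/
noncomputable def other (M : MComplex K2 K1 K0) (w : K0) (u : K2) (e : K1) : K1 :=
  if h : ∃ e', e' ≠ e ∧ WEdge M w e' u then h.choose else e

lemma other_spec (M : MComplex K2 K1 K0) (w : K0) {u : K2} (e : K1)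
    (hu : vertexOf M.d2 M.d1 w u) :
    other M w u e ≠ e ∧ WEdge M w (other M w u e) u := by
  obtain ⟨e1, e2, h12, h1, h2, hcl⟩ := two_wedges M w u hu
  have h : ∃ e', e' ≠ e ∧ WEdge M w e' u := by
    by_cases he : e1 = e
    · exact ⟨e2, fun hh => h12 (he.trans hh.symm), h2⟩
    · exact ⟨e1, he, h1⟩
  rw [other, dif_pos h]
  exact h.choose_spec

lemma other_unique (M : MComplex K2 K1 K0) (w : K0) {u : K2} {e e' : K1}
    (hu : vertexOf M.d2 M.d1 w u) (he : WEdge M w e u) (he' : WEdge M w e' u)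
    (hne : e' ≠ e) : other M w u e = e' := by
  obtain ⟨ho, hw⟩ := other_spec M w e hu
  obtain ⟨e1, e2, h12, h1, h2, hcl⟩ := two_wedges M w u hu
  rcases hcl e he with a | a <;> rcases hcl e' he' with b | b <;>
      rcases hcl _ hw with c | c <;>
    first
      | exact absurd (b.trans a.symm) hne
      | exact absurd (c.trans a.symm) ho
      | exact c.trans b.symm

/-- The walk state is a pair (2-cell, `w`-edge of it). -/
def Good (M : MComplex K2 K1 K0) (w : K0) (p : K2 × K1) : Prop :=
  WEdge M w p.2 p.1

/-- One step of the walk: cross the edge, then turn to the other `w`-edge. -/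
noncomputable def stp (M : MComplex K2 K1 K0) (w : K0) (p : K2 × K1) : K2 × K1 :=
  (flip M p.1 p.2, other M w (flip M p.1 p.2) p.2)

/-- The inverse step. -/
noncomputable def bck (M : MComplex K2 K1 K0) (w : K0) (p : K2 × K1) : K2 × K1 :=
  (flip M p.1 (other M w p.1 p.2), other M w p.1 p.2)

/-- The reversal involution. -/
noncomputable def rho (M : MComplex K2 K1 K0) (w : K0) (p : K2 × K1) : K2 × K1 :=
  (p.1, other M w p.1 p.2)

lemma stp_rho (M : MComplex K2 K1 K0) (w : K0) (p : K2 × K1) :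
    stp M w (rho M w p) = rho M w (bck M w p) := rfl

lemma good_stp (M : MComplex K2 K1 K0) (w : K0) {p : K2 × K1} (hp : Good M w p) :
    Good M w (stp M w p) := by
  obtain ⟨he, hj⟩ := hp
  obtain ⟨hne, hev⟩ := flip_spec M he
  have hwv : WEdge M w p.2 (flip M p.1 p.2) := ⟨hev, hj⟩
  exact (other_spec M w p.2 hwv.vertexOf).2

lemma bck_stp (M : MComplex K2 K1 K0) (w : K0) {p : K2 × K1} (hp : Good M w p) :
    bck M w (stp M w p) = p := by
  obtain ⟨u, e⟩ := p
  obtain ⟨he, hj⟩ := hp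
  obtain ⟨hne, hev⟩ := flip_spec M he
  have hwv : WEdge M w e (flip M u e) := ⟨hev, hj⟩
  have hvert := hwv.vertexOf
  have hw' : WEdge M w (other M w (flip M u e) e) (flip M u e) :=
    (other_spec M w e hvert).2
  have hne' : e ≠ other M w (flip M u e) e := (other_spec M w e hvert).1.symm
  have h1 : other M w (flip M u e) (other M w (flip M u e) e) = e :=
    other_unique M w hvert hw' hwv hne'
  show (flip M (flip M u e) (other M w (flip M u e) (other M w (flip M u e) e)),
      other M w (flip M u e) (other M w (flip M u e) e)) = (u, e)
  rw [h1]
  exact Prod.ext (flip_unique M hev he hne.symm) rfl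

end CamembertAux

open CamembertAux in
/-- **Camembert lemma.** For every 0-cell `w` of an `ℳ`-complex, the set
`L_w = {u ∈ L₂ ∣ w is a vertex of u}` can be arranged in a cyclic order
`u₀, …, u_{n-1}` in which consecutive 2-cells (indices mod `n`) are `w`-neighbours. -/
theorem camembert {K2 K1 K0 : Type*} (M : MComplex K2 K1 K0) (w : K0) :
    ∃ n : ℕ, 0 < n ∧ ∃ u : ℕ → K2,
      (∀ i < n, vertexOf M.d2 M.d1 w (u i)) ∧
      (∀ i j, i < n → j < n → u i = u j → i = j) ∧
      (∀ v : K2, vertexOf M.d2 M.d1 w v → ∃ i < n, u i = v) ∧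
      (∀ i, i + 1 < n → wNbr M.d2 M.d1 w (u i) (u (i + 1))) ∧
      wNbr M.d2 M.d1 w (u (n - 1)) (u 0) := by
  classical
  haveI := M.finite2
  haveI := M.finite1
  have pext : ∀ p q : K2 × K1, p.1 = q.1 → p.2 = q.2 → p = q := by
    intro p q h1 h2
    obtain ⟨a, b⟩ := p
    obtain ⟨c, d⟩ := q
    simp only at h1 h2
    rw [h1, h2]
  obtain ⟨e0, j0, hj0⟩ := M.homog0 w
  obtain ⟨u0, hu0⟩ := M.homog1 e0
  let p0 : K2 × K1 := (u0, e0)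
  have good0 : Good M w p0 := ⟨hu0, j0, hj0⟩
  let f : ℕ → K2 × K1 := fun i => (stp M w)^[i] p0
  have hstep : ∀ i, f (i + 1) = stp M w (f i) := fun i =>
    Function.iterate_succ_apply' (stp M w) i p0
  have goodf : ∀ i, Good M w (f i) := by
    intro i
    induction i with
    | zero => exact good0
    | succ i ih => rw [hstep i]; exact good_stp M w ih
  have hcancel : ∀ (a : ℕ) (x y : K2 × K1), Good M w x → Good M w y →
      (stp M w)^[a] x = (stp M w)^[a] y → x = y := by
    intro a
    induction a with
    | zero => intro x y _ _ h; simpa using h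
    | succ a ih =>
      intro x y hx hy h
      rw [Function.iterate_succ_apply, Function.iterate_succ_apply] at h
      have h2 := ih _ _ (good_stp M w hx) (good_stp M w hy) h
      calc x = bck M w (stp M w x) := (bck_stp M w hx).symm
        _ = bck M w (stp M w y) := by rw [h2]
        _ = y := bck_stp M w hy
  have key0 : ∀ a b : ℕ, a < b → f a = f b → f (b - a) = f 0 := by
    intro a b hab h
    have h' : (stp M w)^[a] p0 = (stp M w)^[a] ((stp M w)^[b - a] p0) := by
      have h2 : (stp M w)^[b] p0 = (stp M w)^[a] ((stp M w)^[b - a] p0) := by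
        rw [← Function.iterate_add_apply]
        congr 1
        omega
      exact h.trans h2
    exact (hcancel a _ _ good0 (goodf (b - a)) h').symm
  have hex : ∃ p : ℕ, 0 < p ∧ f p = f 0 := by
    obtain ⟨a, b, hab, h⟩ := Finite.exists_ne_map_eq_of_infinite f
    rcases Nat.lt_or_ge a b with h1 | h1
    · exact ⟨b - a, by omega, key0 a b h1 h⟩
    · have h1' : b < a := by omega
      exact ⟨a - b, by omega, key0 b a h1' h.symm⟩
  obtain ⟨n, hnpos, hfn, hmin⟩ : ∃ n : ℕ, 0 < n ∧ f n = f 0 ∧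
      ∀ m, 0 < m → m < n → f m ≠ f 0 :=
    ⟨Nat.find hex, (Nat.find_spec hex).1, (Nat.find_spec hex).2,
      fun m h1 h2 hc => Nat.find_min hex h2 ⟨h1, hc⟩⟩
  have hper : ∀ i, f (i + n) = f i := by
    intro i
    calc f (i + n) = (stp M w)^[i] ((stp M w)^[n] p0) := Function.iterate_add_apply _ i n p0
      _ = (stp M w)^[i] p0 := by rw [show (stp M w)^[n] p0 = p0 from hfn]
      _ = f i := rfl
  have hperc : ∀ c i, f (i + c * n) = f i := by
    intro c
    induction c with
    | zero => intro i; simp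
    | succ c ih =>
      intro i
      have h1 : i + (c + 1) * n = (i + c * n) + n := by ring
      rw [h1, hper, ih]
  have hmodself : ∀ a : ℕ, f a = f (a % n) := by
    intro a
    conv_lhs => rw [← Nat.mod_add_div' a n]
    exact hperc _ _
  have hmod : ∀ a b : ℕ, a % n = b % n → f a = f b := by
    intro a b h
    rw [hmodself a, hmodself b, h]
  have finj : ∀ a b : ℕ, a < b → b < n → f a = f b → False := by
    intro a b hab hbn h
    exact hmin (b - a) (by omega) (by omega : b - a < n) (key0 a b hab h)
  have hA : ∀ i, bck M w (f i) = f (i + (n - 1)) := by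
    intro i
    have h1 : stp M w (f (i + (n - 1))) = f i := by
      rw [← hstep (i + (n - 1))]
      have h2 : i + (n - 1) + 1 = i + n := by omega
      rw [h2, hper]
    calc bck M w (f i) = bck M w (stp M w (f (i + (n - 1)))) := by rw [h1]
      _ = f (i + (n - 1)) := bck_stp M w (goodf _)
  have harith : ∀ k j : ℕ, k + j * (n - 1) + (n - 1) = k + (j + 1) * (n - 1) := by
    intro k j
    generalize n - 1 = t
    ring
  have hrev : ∀ k m : ℕ, f m = rho M w (f k) →
      ∀ j, f (m + j) = rho M w (f (k + j * (n - 1))) := by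
    intro k m h0 j
    induction j with
    | zero => simpa using h0
    | succ j ih =>
      have h1 : f (m + (j + 1)) = stp M w (f (m + j)) := by
        rw [← hstep (m + j)]
        congr 1
      rw [h1, ih, stp_rho, hA, harith]
  have cellinj : ∀ k m : ℕ, k < m → m < n → (f k).1 = (f m).1 → False := by
    intro k m hkm hmn hcell
    have hfne : f k ≠ f m := fun h => finj k m hkm hmn h
    have hsne : (f m).2 ≠ (f k).2 := fun h => hfne (pext _ _ hcell h.symm)
    have hwk : WEdge M w (f k).2 (f k).1 := goodf k
    have hwm : WEdge M w (f m).2 (f k).1 := by rw [hcell]; exact goodf m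
    have hvert : vertexOf M.d2 M.d1 w (f k).1 := WEdge.vertexOf hwk
    have hother : other M w (f k).1 (f k).2 = (f m).2 :=
      other_unique M w hvert hwk hwm hsne
    have h0 : f m = rho M w (f k) := pext _ _ hcell.symm hother.symm
    have caseA : ∀ j s : ℕ, 2 * j + m = k + s * n → False := by
      intro j s hjs
      have key : (m + j) + j * n = (k + j * (n - 1)) + s * n := by
        obtain ⟨n', rfl⟩ : ∃ n', n = n' + 1 := ⟨n - 1, by omega⟩
        have e1 : n' + 1 - 1 = n' := by omega
        rw [e1]
        ring_nf
        ring_nf at hjs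
        linarith
      have hc : (m + j) % n = (k + j * (n - 1)) % n := by
        conv_lhs => rw [← Nat.add_mul_mod_self_right (m + j) j n]
        rw [key, Nat.add_mul_mod_self_right]
      have hx : f (m + j) = f (k + j * (n - 1)) := hmod _ _ hc
      have hy := hrev k m h0 j
      have hq : f (k + j * (n - 1)) = rho M w (f (k + j * (n - 1))) := hx.symm.trans hy
      have hvq : vertexOf M.d2 M.d1 w (f (k + j * (n - 1))).1 :=
        WEdge.vertexOf (goodf _)
      exact (other_spec M w (f (k + j * (n - 1))).2 hvq).1 (congrArg Prod.snd hq).symm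
    have caseB : ∀ j s : ℕ, 2 * j + m = k + 1 + s * n → False := by
      intro j s hjs
      have key : (m + j) + j * n = (k + j * (n - 1) + 1) + s * n := by
        obtain ⟨n', rfl⟩ : ∃ n', n = n' + 1 := ⟨n - 1, by omega⟩
        have e1 : n' + 1 - 1 = n' := by omega
        rw [e1]
        ring_nf
        ring_nf at hjs
        linarith
      have hc : (m + j) % n = (k + j * (n - 1) + 1) % n := by
        conv_lhs => rw [← Nat.add_mul_mod_self_right (m + j) j n]
        rw [key, Nat.add_mul_mod_self_right]
      have hx : f (m + j) = f (k + j * (n - 1) + 1) := hmod _ _ hc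
      have hy := hrev k m h0 j
      have hs' : f (k + j * (n - 1) + 1) = stp M w (f (k + j * (n - 1))) := hstep _
      have hq : stp M w (f (k + j * (n - 1))) = rho M w (f (k + j * (n - 1))) :=
        hs'.symm.trans (hx.symm.trans hy)
      have hg : edgeOf M.d2 (f (k + j * (n - 1))).2 (f (k + j * (n - 1))).1 := (goodf _).1
      exact (flip_spec M hg).1 (congrArg Prod.fst hq)
    rcases Nat.even_or_odd (n - (m - k)) with ⟨r, hr⟩ | ⟨r, hr⟩
    · exact caseA r 1 (by omega)
    · rcases Nat.even_or_odd n with ⟨t, ht⟩ | ⟨t, ht⟩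
      · exact caseB (r + 1) 1 (by omega)
      · exact caseA (t + r + 1) 2 (by omega)
  refine ⟨n, hnpos, fun i => (f i).1, ?_, ?_, ?_, ?_, ?_⟩
  · intro i _
    exact WEdge.vertexOf (goodf i)
  · intro a b ha hb h
    by_contra hne2
    rcases Nat.lt_or_ge a b with h1 | h1
    · exact cellinj a b h1 hb h
    · exact cellinj b a (by omega) ha h.symm
  · intro v hv
    have h0 : ∃ i, (f i).1 = v := by
      have hch := M.linked w u0 v (WEdge.vertexOf good0) hv
      clear hv
      induction hch with
      | refl => exact ⟨0, rfl⟩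
      | @tail b c hab hbc ih =>
        obtain ⟨i, hi⟩ := ih
        obtain ⟨e, heb, hec, hje⟩ := hbc
        by_cases hcb : c = b
        · exact ⟨i, by rw [hi, hcb]⟩
        · have hwe : WEdge M w e b := ⟨heb, hje⟩
          have hvb : vertexOf M.d2 M.d1 w b := WEdge.vertexOf hwe
          have hwk : WEdge M w (f i).2 b := by rw [← hi]; exact goodf i
          by_cases hee : e = (f i).2
          · refine ⟨i + 1, ?_⟩
            rw [hstep i]
            show flip M (f i).1 (f i).2 = c
            rw [hi, ← hee]
            exact flip_unique M heb hec hcb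
          · have heo : other M w b (f i).2 = e := other_unique M w hvb hwk hwe hee
            refine ⟨i + (n - 1), ?_⟩
            rw [← hA i]
            show flip M (f i).1 (other M w (f i).1 (f i).2) = c
            rw [hi, heo]
            exact flip_unique M heb hec hcb
    obtain ⟨i, hi⟩ := h0
    refine ⟨i % n, Nat.mod_lt _ hnpos, ?_⟩
    rw [← hi]
    exact congrArg Prod.fst (hmod (i % n) i (Nat.mod_mod_of_dvd i dvd_rfl))
  · intro i _
    obtain ⟨he, hj⟩ := goodf i
    refine ⟨(f i).2, he, ?_, hj⟩
    show edgeOf M.d2 (f i).2 (f (i + 1)).1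
    rw [hstep i]
    exact (flip_spec M he).2
  · obtain ⟨he, hj⟩ := goodf (n - 1)
    refine ⟨(f (n - 1)).2, he, ?_, hj⟩
    show edgeOf M.d2 (f (n - 1)).2 (f 0).1
    have h1 : f 0 = stp M w (f (n - 1)) := by
      rw [← hstep (n - 1)]
      have h2 : n - 1 + 1 = n := by omega
      rw [h2]
      exact hfn.symm
    rw [h1]
    exact (flip_spec M he).2
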